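/- For every n ∈ ℕ, Ω_punc is the disjoint union over p ∈ 𝒫 and x ∈ Punc(n, p) of the sets {ω^n(T) − x : T ∈ Ω_punc, p ∈ T}; that is, every T' ∈ Ω_punc can be written as T' = ω^n(T) − x with T ∈ Ω_punc, p ∈ T, p ∈ 𝒫 and x ∈ Punc(n, p), and the triple (p, x, T) is uniquely determined by T'. (This is the set-level form of the identity 1 = Σ_{p∈𝒫} Σ_{x∈Punc(n,p)} e^n_p(x, x).) -/

import Mathlib

open Metric Set Pointwise

noncomputable section

/-- Points of `ℝ^d`. -/
abbrev Pt (d : ℕ) := EuclideanSpace ℝ (Fin d)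

/-- A (possibly labelled) tile in `ℝ^d`: a subset of `ℝ^d` together with a label. -/
structure Tile (d : ℕ) where
  carrier : Set (Pt d)
  label : ℕ

instance {d : ℕ} : Inhabited (Tile d) := ⟨⟨∅, 0⟩⟩

/-- Translate of a tile by a vector. -/
def Tile.translate {d : ℕ} (t : Tile d) (x : Pt d) : Tile d :=
  ⟨(fun y => y + x) '' t.carrier, t.label⟩

/-- A tile proper: homeomorphic to the closed unit ball. -/
def Tile.IsTile {d : ℕ} (t : Tile d) : Prop :=
  Nonempty (t.carrier ≃ₜ (Metric.closedBall (0 : Pt d) 1))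

/-- Support of a partial tiling: the union of its tiles. -/
def psupp {d : ℕ} (P : Set (Tile d)) : Set (Pt d) := ⋃ t ∈ P, t.carrier

/-- `tilesAt P U` = the tiles of `P` meeting `U`, written `P(U)` in the paper. -/
def tilesAt {d : ℕ} (P : Set (Tile d)) (U : Set (Pt d)) : Set (Tile d) :=
  {t ∈ P | (t.carrier ∩ U).Nonempty}

/-- Translate of a collection of tiles. -/
def translateSet {d : ℕ} (P : Set (Tile d)) (x : Pt d) : Set (Tile d) :=
  (fun t => t.translate x) '' P

/-- A partial tiling: tiles with pairwise disjoint interiors. -/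
def IsPartialTiling {d : ℕ} (P : Set (Tile d)) : Prop :=
  (∀ t ∈ P, t.IsTile) ∧
  ∀ t ∈ P, ∀ t' ∈ P, t ≠ t' → interior t.carrier ∩ interior t'.carrier = ∅

/-- A patch: a finite partial tiling. -/
def IsPatch {d : ℕ} (P : Set (Tile d)) : Prop := IsPartialTiling P ∧ P.Finite

/-- A tiling of all of `ℝ^d`. -/
def IsTilingOfSpace {d : ℕ} (P : Set (Tile d)) : Prop :=
  IsPartialTiling P ∧ psupp P = univ

/-- A substitution tiling system `(𝒫, ω)` with inflation constant `λ > 1`. -/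
structure SubstSystem (d : ℕ) where
  proto : Set (Tile d)
  proto_finite : proto.Finite
  proto_nonempty : proto.Nonempty
  proto_isTile : ∀ p ∈ proto, p.IsTile
  proto_zero_mem : ∀ p ∈ proto, (0 : Pt d) ∈ interior p.carrier
  proto_no_translate : ∀ p ∈ proto, ∀ q ∈ proto, ∀ x : Pt d,
    q = p.translate x → p = q ∧ x = 0
  lam : ℝ
  one_lt_lam : 1 < lam
  sub : Tile d → Set (Tile d)
  sub_patch : ∀ p ∈ proto, IsPatch (sub p)
  sub_proto : ∀ p ∈ proto, ∀ t ∈ sub p, ∃ q ∈ proto, ∃ x : Pt d, t = q.translate x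
  sub_supp : ∀ p ∈ proto, psupp (sub p) = lam • p.carrier
  sub_translate : ∀ (t : Tile d) (x : Pt d),
    sub (t.translate x) = (fun s => s.translate (lam • x)) '' sub t

namespace SubstSystem

variable {d : ℕ} (S : SubstSystem d)

/-- Tile-wise application of the substitution to a collection of tiles. -/
def subSet (P : Set (Tile d)) : Set (Tile d) := ⋃ t ∈ P, S.sub t

/-- Iterated substitution `ω^n` on collections of tiles. -/
def subIter (n : ℕ) (P : Set (Tile d)) : Set (Tile d) := (S.subSet)^[n] P

/-- `ω^n(t)` for a single tile `t`. -/
def omegan (n : ℕ) (t : Tile d) : Set (Tile d) := S.subIter n {t}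

/-- The continuous hull `Ω`. -/
def Omega : Set (Set (Tile d)) :=
  {T | IsTilingOfSpace T ∧ ∀ P : Set (Tile d), P ⊆ T → IsPatch P →
    ∃ n : ℕ, ∃ p ∈ S.proto, ∃ x : Pt d, P ⊆ translateSet (S.omegan n p) x}

/-- `x` is the puncture of the tile `t`, i.e. `t = p + x` for a prototile `p`. -/
def IsPuncture (t : Tile d) (x : Pt d) : Prop :=
  ∃ p ∈ S.proto, t = p.translate x

open Classical in
/-- The puncture `x(t)` of a tile `t` (chosen; unique for translates of prototiles). -/
def punc (t : Tile d) : Pt d :=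
  if h : ∃ x : Pt d, S.IsPuncture t x then h.choose else 0

/-- The punctured hull (transversal) `Ω_punc`. -/
def OmegaPunc : Set (Set (Tile d)) :=
  {T ∈ S.Omega | ∃ t ∈ T, S.IsPuncture t 0}

end SubstSystem

/-- The tiling metric. -/
def tilingDist {d : ℕ} (T T' : Set (Tile d)) : ℝ :=
  sInf ({1} ∪ {ε : ℝ | 0 < ε ∧ ∃ x x' : Pt d, ‖x‖ < ε ∧ ‖x'‖ < ε ∧
    tilesAt (translateSet T (-x)) (ball (0 : Pt d) (1 / ε)) =
      tilesAt (translateSet T' (-x')) (ball (0 : Pt d) (1 / ε))})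

namespace SubstSystem

variable {d : ℕ} (S : SubstSystem d)

/-- Density of a family of tilings in `Ω_punc` w.r.t. the tiling metric. -/
def DenseInPunc (E : Set (Set (Tile d))) : Prop :=
  ∀ T ∈ S.OmegaPunc, ∀ ε : ℝ, 0 < ε → ∃ T' ∈ E, tilingDist T T' < ε

/-- Openness of a subset of `Ω_punc` w.r.t. the tiling metric (subspace topology). -/
def OpenInPunc (E : Set (Set (Tile d))) : Prop :=
  E ⊆ S.OmegaPunc ∧ ∀ T ∈ E, ∃ ε : ℝ, 0 < ε ∧
    ∀ T' ∈ S.OmegaPunc, tilingDist T T' < ε → T' ∈ E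

/-- The translational equivalence relation `R_punc` on `Ω_punc`. -/
def Rpunc : Set (Set (Tile d) × Set (Tile d)) :=
  {TT | TT.1 ∈ S.OmegaPunc ∧ TT.2 ∈ S.OmegaPunc ∧ ∃ x : Pt d, TT.2 = translateSet TT.1 x}

/-- `Punc(n, p)`: the punctures of the tiles of `ω^n(p)`. -/
def Punc (n : ℕ) (p : Tile d) : Set (Pt d) :=
  {x | ∃ t ∈ S.omegan n p, S.IsPuncture t x}

/-- `E^n_p(x, y)`. -/
def Eset (n : ℕ) (p : Tile d) (x y : Pt d) : Set (Set (Tile d) × Set (Tile d)) :=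
  {TT | ∃ T ∈ S.OmegaPunc, p ∈ T ∧
    TT.1 = translateSet (S.subIter n T) (-x) ∧ TT.2 = translateSet (S.subIter n T) (-y)}

/-- `R_n`. -/
def Rn (n : ℕ) : Set (Set (Tile d) × Set (Tile d)) :=
  ⋃ p ∈ S.proto, ⋃ x ∈ S.Punc n p, ⋃ y ∈ S.Punc n p, S.Eset n p x y

/-- `R_AF = ∪ₙ R_n`. -/
def RAF : Set (Set (Tile d) × Set (Tile d)) := ⋃ n : ℕ, S.Rn n

/-- `U(P, t)`. -/
def Uset (P : Set (Tile d)) (t : Tile d) : Set (Set (Tile d)) :=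
  {T ∈ S.OmegaPunc | translateSet P (-(S.punc t)) ⊆ T}

/-- `V(P, t₁, t₂)`. -/
def Vset (P : Set (Tile d)) (t₁ t₂ : Tile d) : Set (Set (Tile d) × Set (Tile d)) :=
  {TT | TT.1 ∈ S.Uset P t₁ ∧ TT.2 = translateSet TT.1 (S.punc t₁ - S.punc t₂)}

/-- (A1) primitivity. -/
def Primitive : Prop :=
  ∃ N : ℕ, ∀ p ∈ S.proto, ∀ q ∈ S.proto, ∃ x : Pt d, Tile.translate q x ∈ S.omegan N p

/-- (A2) finite local complexity. -/
def FLC : Prop :=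
  ∀ R : ℝ, 0 < R → ∃ Ps : Set (Set (Tile d)), Ps.Finite ∧
    ∀ P : Set (Tile d), IsPatch P → Metric.diam (psupp P) < R →
      (∃ T ∈ S.Omega, P ⊆ T) → ∃ P₀ ∈ Ps, ∃ x : Pt d, P = translateSet P₀ x

/-- (A3) `ω : Ω → Ω` is bijective. -/
def SubBijective : Prop := Set.BijOn S.subSet S.Omega S.Omega

/-- (A4) `ω` forces its border. -/
def ForcesBorder : Prop :=
  ∃ n : ℕ, ∀ p ∈ S.proto, ∀ T ∈ S.Omega, ∀ T' ∈ S.Omega, ∀ x x' : Pt d,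
    translateSet (S.omegan n p) x ⊆ T → translateSet (S.omegan n p) x' ⊆ T' →
    translateSet (tilesAt T ((fun y => y + x) '' psupp (S.omegan n p))) (-x) =
      translateSet (tilesAt T' ((fun y => y + x') '' psupp (S.omegan n p))) (-x')

/-- Prototile boundaries have box-counting dimension strictly less than `d`. -/
def SmallBoundary : Prop :=
  ∃ c : ℝ, c < d ∧ ∃ K₀ : ℝ, ∀ p ∈ S.proto, ∀ ε : ℝ, 0 < ε →
    ∃ centers : Finset (Pt d), (centers.card : ℝ) ≤ K₀ * ε ^ (-c) ∧
      frontier p.carrier ⊆ ⋃ z ∈ centers, ball z ε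

end SubstSystem

/-- A symmetry group action for `(𝒫, ω)`: `G ≤ O(d, ℝ)` acting on tiles, preserving
the prototile set and commuting with the substitution. -/
structure SymmAction {d : ℕ} (S : SubstSystem d) (G : Subgroup (Pt d ≃ₗᵢ[ℝ] Pt d)) where
  act : G → Tile d → Tile d
  act_carrier : ∀ (g : G) (t : Tile d),
    (act g t).carrier = (g : Pt d ≃ₗᵢ[ℝ] Pt d) '' t.carrier
  act_one : ∀ t : Tile d, act 1 t = t
  act_mul : ∀ (g h : G) (t : Tile d), act (g * h) t = act g (act h t)
  act_proto : ∀ (g : G), ∀ p ∈ S.proto, act g p ∈ S.proto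
  act_translate : ∀ (g : G) (t : Tile d) (x : Pt d),
    act g (t.translate x) = (act g t).translate ((g : Pt d ≃ₗᵢ[ℝ] Pt d) x)
  act_sub : ∀ (g : G), ∀ p ∈ S.proto, S.sub (act g p) = act g '' S.sub p

/-- Action of a group element on a (partial) tiling: `gT = {gt : t ∈ T}`. -/
def SymmAction.actSet {d : ℕ} {S : SubstSystem d} {G : Subgroup (Pt d ≃ₗᵢ[ℝ] Pt d)}
    (σ : SymmAction S G) (g : G) (T : Set (Tile d)) : Set (Tile d) := σ.act g '' T

/-- `G` acts freely on the prototile set. -/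
def SymmAction.FreeOnProto {d : ℕ} {S : SubstSystem d} {G : Subgroup (Pt d ≃ₗᵢ[ℝ] Pt d)}
    (σ : SymmAction S G) : Prop := ∀ g : G, ∀ p ∈ S.proto, σ.act g p = p → g = 1

/-- Composition of relations. -/
def relComp {α : Type*} (R₁ R₂ : Set (α × α)) : Set (α × α) :=
  {q | ∃ z : α, (q.1, z) ∈ R₁ ∧ (z, q.2) ∈ R₂}

/-- Transpose (inverse) of a relation. -/
def relTrans {α : Type*} (R : Set (α × α)) : Set (α × α) := {q | (q.2, q.1) ∈ R}

end

section Helpers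
variable {d : ℕ}

lemma Tile.translate_translate (t : Tile d) (x y : Pt d) :
    (t.translate x).translate y = t.translate (x + y) := by
  unfold Tile.translate
  simp only [Tile.mk.injEq, and_true, Set.image_image]
  apply Set.image_congr'
  intro a; simp [add_assoc]

lemma Tile.translate_zero (t : Tile d) : t.translate 0 = t := by
  unfold Tile.translate
  cases t with
  | mk c l => simp

lemma Tile.translate_cancel {t t' : Tile d} {x : Pt d}
    (h : t.translate x = t'.translate x) : t = t' := by
  have := congrArg (fun s => Tile.translate s (-x)) h
  simpa [Tile.translate_translate, Tile.translate_zero] using this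

lemma mem_translateSet {P : Set (Tile d)} {x : Pt d} {t : Tile d} :
    t ∈ translateSet P x ↔ ∃ s ∈ P, t = s.translate x := by
  simp [translateSet, eq_comm]

lemma translateSet_translateSet (P : Set (Tile d)) (x y : Pt d) :
    translateSet (translateSet P x) y = translateSet P (x + y) := by
  unfold translateSet
  simp only [Set.image_image]
  apply Set.image_congr'
  intro a; rw [Tile.translate_translate]

lemma translateSet_zero (P : Set (Tile d)) : translateSet P 0 = P := by
  simp [translateSet, Tile.translate_zero]

lemma translateSet_singleton (t : Tile d) (x : Pt d) :
    translateSet {t} x = {t.translate x} := by simp [translateSet]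

lemma translateSet_mono {P Q : Set (Tile d)} (h : P ⊆ Q) (x : Pt d) :
    translateSet P x ⊆ translateSet Q x := Set.image_mono h

lemma interior_image_add (A : Set (Pt d)) (x : Pt d) :
    interior ((fun y => y + x) '' A) = (fun y => y + x) '' interior A := by
  have h := (Homeomorph.addRight x).image_interior A
  simpa [Homeomorph.coe_addRight] using h.symm

lemma smul_image_add (c : ℝ) (A : Set (Pt d)) (x : Pt d) :
    c • ((fun y => y + x) '' A) = (fun y => y + c • x) '' (c • A) := by
  ext z
  simp only [Set.mem_smul_set, Set.mem_image]
  constructor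
  · rintro ⟨w, ⟨a, ha, rfl⟩, rfl⟩
    exact ⟨c • a, ⟨a, ha, rfl⟩, (smul_add c a x).symm⟩
  · rintro ⟨w, ⟨a, ha, rfl⟩, rfl⟩
    exact ⟨a + x, ⟨a, ha, rfl⟩, smul_add c a x⟩

lemma psupp_translateSet (P : Set (Tile d)) (x : Pt d) :
    psupp (translateSet P x) = (fun y => y + x) '' psupp P := by
  ext z
  simp only [psupp, translateSet, Set.mem_iUnion, Set.mem_image]
  constructor
  · rintro ⟨t, ⟨⟨s, hs, rfl⟩, hz⟩⟩
    obtain ⟨a, ha, rfl⟩ := hz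
    exact ⟨a, ⟨s, ⟨hs, ha⟩⟩, rfl⟩
  · rintro ⟨a, ⟨s, hs, ha⟩, rfl⟩
    exact ⟨s.translate x, ⟨⟨s, hs, rfl⟩, ⟨a, ha, rfl⟩⟩⟩

variable (S : SubstSystem d)

/-- A tile that is a translate of a prototile. -/
def ProtoT (t : Tile d) : Prop := ∃ p ∈ S.proto, ∃ x : Pt d, t = p.translate x

lemma lam_ne_zero : S.lam ≠ 0 := by
  have := S.one_lt_lam; positivity

lemma lam_pow_ne_zero (n : ℕ) : S.lam ^ n ≠ 0 := pow_ne_zero n (lam_ne_zero S)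

lemma subSet_singleton (t : Tile d) : S.subSet {t} = S.sub t := by
  simp [SubstSystem.subSet]

lemma subSet_biUnion {ι : Type*} (P : ι → Set (Tile d)) (I : Set ι) :
    S.subSet (⋃ i ∈ I, P i) = ⋃ i ∈ I, S.subSet (P i) := by
  ext t
  simp only [SubstSystem.subSet, Set.mem_iUnion]
  tauto

lemma subIter_succ' (n : ℕ) (P : Set (Tile d)) :
    S.subIter (n + 1) P = S.subSet (S.subIter n P) := by
  simp [SubstSystem.subIter, Function.iterate_succ_apply']

lemma subIter_succ (n : ℕ) (P : Set (Tile d)) :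
    S.subIter (n + 1) P = S.subIter n (S.subSet P) := by
  simp [SubstSystem.subIter, Function.iterate_succ_apply]

lemma subIter_zero (P : Set (Tile d)) : S.subIter 0 P = P := rfl

lemma omegan_succ' (n : ℕ) (t : Tile d) :
    S.omegan (n + 1) t = S.subSet (S.omegan n t) := subIter_succ' S n {t}

lemma subIter_eq_biUnion (n : ℕ) (T : Set (Tile d)) :
    S.subIter n T = ⋃ t ∈ T, S.omegan n t := by
  induction n with
  | zero =>
    simp [subIter_zero, SubstSystem.omegan]
  | succ n ih =>
    rw [subIter_succ', ih, subSet_biUnion]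
    refine Set.iUnion₂_congr fun t ht => ?_
    rw [omegan_succ']

lemma omegan_mem_subIter {n : ℕ} {T : Set (Tile d)} {s t : Tile d}
    (hs : s ∈ T) (ht : t ∈ S.omegan n s) : t ∈ S.subIter n T := by
  rw [subIter_eq_biUnion]
  exact Set.mem_biUnion hs ht

lemma subSet_translate (P : Set (Tile d)) (x : Pt d) :
    S.subSet (translateSet P x) = translateSet (S.subSet P) (S.lam • x) := by
  ext t
  simp only [SubstSystem.subSet, translateSet, Set.mem_iUnion, Set.mem_image]
  constructor
  · rintro ⟨u, ⟨⟨s, hs, rfl⟩, htu⟩⟩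
    rw [S.sub_translate s x] at htu
    obtain ⟨w, hw, rfl⟩ := htu
    exact ⟨w, ⟨s, hs, hw⟩, rfl⟩
  · rintro ⟨w, ⟨s, hs, hw⟩, rfl⟩
    refine ⟨s.translate x, ⟨⟨s, hs, rfl⟩, ?_⟩⟩
    rw [S.sub_translate s x]
    exact ⟨w, hw, rfl⟩

lemma subIter_translate (n : ℕ) (P : Set (Tile d)) (x : Pt d) :
    S.subIter n (translateSet P x) = translateSet (S.subIter n P) (S.lam ^ n • x) := by
  induction n generalizing P x with
  | zero => simp [subIter_zero]
  | succ n ih =>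
    rw [subIter_succ, subSet_translate, subIter_succ, ih]
    congr 1
    rw [smul_smul, ← pow_succ]

lemma omegan_translate (n : ℕ) (t : Tile d) (x : Pt d) :
    S.omegan n (t.translate x) = translateSet (S.omegan n t) (S.lam ^ n • x) := by
  have h : ({t.translate x} : Set (Tile d)) = translateSet {t} x :=
    (translateSet_singleton t x).symm
  show S.subIter n {t.translate x} = _
  rw [h, subIter_translate]
  rfl

lemma protoT_translate {t : Tile d} (h : ProtoT S t) (x : Pt d) :
    ProtoT S (t.translate x) := by
  obtain ⟨p, hp, y, rfl⟩ := h
  exact ⟨p, hp, y + x, Tile.translate_translate p y x⟩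

lemma sub_protoT {t : Tile d} (h : ProtoT S t) {s : Tile d} (hs : s ∈ S.sub t) :
    ProtoT S s := by
  obtain ⟨p, hp, x, rfl⟩ := h
  rw [S.sub_translate p x] at hs
  obtain ⟨w, hw, rfl⟩ := hs
  obtain ⟨q, hq, y, rfl⟩ := S.sub_proto p hp w hw
  exact ⟨q, hq, y + S.lam • x, Tile.translate_translate q y _⟩

lemma omegan_protoT {t : Tile d} (h : ProtoT S t) (n : ℕ) {s : Tile d}
    (hs : s ∈ S.omegan n t) : ProtoT S s := by
  induction n generalizing s with
  | zero =>
    have : s = t := by simpa [SubstSystem.omegan, subIter_zero] using hs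
    rwa [this]
  | succ n ih =>
    rw [omegan_succ'] at hs
    simp only [SubstSystem.subSet, Set.mem_iUnion] at hs
    obtain ⟨u, hu, hsu⟩ := hs
    exact sub_protoT S (ih hu) hsu

lemma psupp_sub_protoT {t : Tile d} (h : ProtoT S t) :
    psupp (S.sub t) = S.lam • t.carrier := by
  obtain ⟨p, hp, x, rfl⟩ := h
  have h1 : S.sub (p.translate x) = translateSet (S.sub p) (S.lam • x) := by
    rw [S.sub_translate p x]; rfl
  rw [h1, psupp_translateSet, S.sub_supp p hp]
  show _ = S.lam • ((fun y => y + x) '' p.carrier)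
  rw [smul_image_add]

lemma psupp_subSet (P : Set (Tile d)) :
    psupp (S.subSet P) = ⋃ t ∈ P, psupp (S.sub t) := by
  ext z
  simp only [psupp, SubstSystem.subSet, Set.mem_iUnion]
  tauto

lemma psupp_omegan {t : Tile d} (h : ProtoT S t) (n : ℕ) :
    psupp (S.omegan n t) = S.lam ^ n • t.carrier := by
  induction n with
  | zero =>
    have : psupp (S.omegan 0 t) = t.carrier := by
      simp [SubstSystem.omegan, subIter_zero, psupp]
    rw [this, pow_zero, one_smul]
  | succ n ih =>
    rw [omegan_succ', psupp_subSet]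
    have h1 : ⋃ s ∈ S.omegan n t, psupp (S.sub s)
        = ⋃ s ∈ S.omegan n t, S.lam • s.carrier := by
      refine Set.iUnion₂_congr fun s hs => ?_
      exact psupp_sub_protoT S (omegan_protoT S h n hs)
    rw [h1, ← Set.smul_set_iUnion₂]
    have h2 : ⋃ s ∈ S.omegan n t, s.carrier = psupp (S.omegan n t) := rfl
    rw [h2, ih, smul_smul, ← pow_succ']

lemma Tile.isTile_translate {t : Tile d} (h : t.IsTile) (x : Pt d) :
    (t.translate x).IsTile := by
  obtain ⟨e⟩ := h
  have himg : (t.translate x).carrier = (Homeomorph.addRight x) '' t.carrier := by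
    show (fun y => y + x) '' t.carrier = _
    rw [Homeomorph.coe_addRight]
  refine ⟨Homeomorph.trans ?_ e⟩
  rw [himg]
  exact ((Homeomorph.addRight x).image t.carrier).symm

lemma interior_carrier_translate (t : Tile d) (x : Pt d) :
    interior (t.translate x).carrier = (fun y => y + x) '' interior t.carrier :=
  interior_image_add t.carrier x

lemma isPartialTiling_translate {T : Set (Tile d)} (h : IsPartialTiling T) (x : Pt d) :
    IsPartialTiling (translateSet T x) := by
  constructor
  · rintro t ht
    obtain ⟨s, hs, rfl⟩ := mem_translateSet.mp ht
    exact Tile.isTile_translate (h.1 s hs) x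
  · rintro t ht t' ht' hne
    obtain ⟨s, hs, rfl⟩ := mem_translateSet.mp ht
    obtain ⟨s', hs', rfl⟩ := mem_translateSet.mp ht'
    have hsne : s ≠ s' := fun hss => hne (by rw [hss])
    rw [interior_carrier_translate, interior_carrier_translate]
    rw [← Set.image_inter (add_left_injective x), h.2 s hs s' hs' hsne, Set.image_empty]

lemma isPatch_translate {P : Set (Tile d)} (h : IsPatch P) (x : Pt d) :
    IsPatch (translateSet P x) :=
  ⟨isPartialTiling_translate h.1 x, h.2.image _⟩

lemma isTilingOfSpace_translate {T : Set (Tile d)} (h : IsTilingOfSpace T) (x : Pt d) :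
    IsTilingOfSpace (translateSet T x) := by
  refine ⟨isPartialTiling_translate h.1 x, ?_⟩
  rw [psupp_translateSet, h.2]
  ext z
  simp only [Set.image_univ, Set.mem_range, Set.mem_univ, iff_true]
  exact ⟨z - x, by simp⟩

lemma Omega_translate {T : Set (Tile d)} (hT : T ∈ S.Omega) (x : Pt d) :
    translateSet T x ∈ S.Omega := by
  obtain ⟨htil, hpatch⟩ := hT
  refine ⟨isTilingOfSpace_translate htil x, ?_⟩
  intro P hPsub hP
  have hback : translateSet P (-x) ⊆ T := by
    intro t ht
    obtain ⟨s, hs, rfl⟩ := mem_translateSet.mp ht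
    obtain ⟨u, hu, rfl⟩ := mem_translateSet.mp (hPsub hs)
    rwa [Tile.translate_translate, add_neg_cancel, Tile.translate_zero]
  obtain ⟨n, p, hp, y, hy⟩ := hpatch _ hback (isPatch_translate hP (-x))
  refine ⟨n, p, hp, y + x, ?_⟩
  have : P = translateSet (translateSet P (-x)) x := by
    rw [translateSet_translateSet, neg_add_cancel, translateSet_zero]
  rw [this, ← translateSet_translateSet]
  exact translateSet_mono hy x

lemma bijOn_subIter (h : S.SubBijective) (n : ℕ) :
    Set.BijOn (S.subIter n) S.Omega S.Omega := by
  induction n with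
  | zero => exact Set.bijOn_id S.Omega
  | succ n ih =>
    have : S.subIter (n + 1) = S.subIter n ∘ S.subSet := by
      funext P
      exact subIter_succ S n P
    rw [this]
    exact ih.comp h

lemma singleton_patch {T : Set (Tile d)} (hT : IsTilingOfSpace T) {t : Tile d}
    (ht : t ∈ T) : IsPatch ({t} : Set (Tile d)) := by
  refine ⟨⟨?_, ?_⟩, Set.finite_singleton t⟩
  · rintro s hs
    rw [Set.mem_singleton_iff] at hs
    rw [hs]; exact hT.1.1 t ht
  · rintro s hs s' hs' hne
    rw [Set.mem_singleton_iff] at hs hs'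
    exact absurd (hs.trans hs'.symm) hne

lemma mem_Omega_protoT {T : Set (Tile d)} (hT : T ∈ S.Omega) {t : Tile d}
    (ht : t ∈ T) : ProtoT S t := by
  obtain ⟨n, p, hp, y, hy⟩ := hT.2 {t} (Set.singleton_subset_iff.mpr ht)
    (singleton_patch hT.1 ht)
  have := hy rfl
  obtain ⟨s, hs, rfl⟩ := mem_translateSet.mp this
  exact protoT_translate S (omegan_protoT S ⟨p, hp, 0, (Tile.translate_zero p).symm⟩ n hs) y

lemma mem_interior_of_protoT {t : Tile d} {x : Pt d} {p : Tile d}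
    (hp : p ∈ S.proto) (h : t = p.translate x) : x ∈ interior t.carrier := by
  subst h
  rw [interior_carrier_translate]
  exact ⟨0, S.proto_zero_mem p hp, by simp⟩

lemma puncture_zero_unique {T : Set (Tile d)} (hT : IsPartialTiling T)
    {t₁ t₂ : Tile d} (h₁ : t₁ ∈ T) (h₂ : t₂ ∈ T)
    (hp₁ : S.IsPuncture t₁ 0) (hp₂ : S.IsPuncture t₂ 0) : t₁ = t₂ := by
  by_contra hne
  obtain ⟨p₁, hpp₁, he₁⟩ := hp₁
  obtain ⟨p₂, hpp₂, he₂⟩ := hp₂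
  have h01 : (0 : Pt d) ∈ interior t₁.carrier := mem_interior_of_protoT S hpp₁ he₁
  have h02 : (0 : Pt d) ∈ interior t₂.carrier := mem_interior_of_protoT S hpp₂ he₂
  have := hT.2 t₁ h₁ t₂ h₂ hne
  exact absurd (this ▸ Set.mem_inter h01 h02) (Set.notMem_empty 0)

lemma parent_unique {T : Set (Tile d)} (hT : IsPartialTiling T)
    {s₁ s₂ : Tile d} (hs₁ : s₁ ∈ T) (hs₂ : s₂ ∈ T)
    (hq₁ : ProtoT S s₁) (hq₂ : ProtoT S s₂) (n : ℕ) {t : Tile d}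
    (h₁ : t ∈ S.omegan n s₁) (h₂ : t ∈ S.omegan n s₂) : s₁ = s₂ := by
  by_contra hne
  obtain ⟨r, hr, z, hz⟩ := omegan_protoT S hq₁ n h₁
  have hzint : z ∈ interior t.carrier := mem_interior_of_protoT S hr hz
  have hsub : ∀ (s : Tile d), ProtoT S s → t ∈ S.omegan n s →
      interior t.carrier ⊆ S.lam ^ n • interior s.carrier := by
    intro s hps hts
    have hc : t.carrier ⊆ S.lam ^ n • s.carrier := by
      rw [← psupp_omegan S hps n]
      intro z hz
      exact Set.mem_biUnion hts hz
    have : interior t.carrier ⊆ interior (S.lam ^ n • s.carrier) :=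
      interior_maximal (interior_subset.trans hc) isOpen_interior
    rwa [interior_smul₀ (lam_pow_ne_zero S n)] at this
  have hmem : z ∈ S.lam ^ n • (interior s₁.carrier ∩ interior s₂.carrier) := by
    rw [Set.smul_set_inter₀ (lam_pow_ne_zero S n)]
    exact ⟨hsub s₁ hq₁ h₁ hzint, hsub s₂ hq₂ h₂ hzint⟩
  rw [hT.2 s₁ hs₁ s₂ hs₂ hne, Set.smul_set_empty] at hmem
  exact absurd hmem (Set.notMem_empty z)

end Helpers

/-- For every `n`, `Ω_punc` is the disjoint union over `p ∈ 𝒫` and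
`x ∈ Punc(n, p)` of the sets `{ω^n(T) − x : T ∈ Ω_punc, p ∈ T}`: every `T' ∈ Ω_punc`
is of the form `ω^n(T) − x` for a unique triple `(p, x, T)`. -/
theorem stmt18 {d : ℕ} (hd : 1 ≤ d) (S : SubstSystem d)
    (hA1 : S.Primitive) (hA2 : S.FLC) (hA3 : S.SubBijective)
    (n : ℕ) (T' : Set (Tile d)) (hT' : T' ∈ S.OmegaPunc) :
    (∃ p ∈ S.proto, ∃ x ∈ S.Punc n p, ∃ T ∈ S.OmegaPunc,
      p ∈ T ∧ T' = translateSet (S.subIter n T) (-x)) ∧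
    (∀ p₁ ∈ S.proto, ∀ x₁ ∈ S.Punc n p₁, ∀ T₁ ∈ S.OmegaPunc,
     ∀ p₂ ∈ S.proto, ∀ x₂ ∈ S.Punc n p₂, ∀ T₂ ∈ S.OmegaPunc,
      p₁ ∈ T₁ → T' = translateSet (S.subIter n T₁) (-x₁) →
      p₂ ∈ T₂ → T' = translateSet (S.subIter n T₂) (-x₂) →
      p₁ = p₂ ∧ x₁ = x₂ ∧ T₁ = T₂) := by
  obtain ⟨hT'Ω, t', ht'T', hps⟩ := hT'
  constructor
  · -- existence
    obtain ⟨S₀, hS₀Ω, hS₀eq⟩ := (bijOn_subIter S hA3 n).surjOn hT'Ω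
    have ht'mem : t' ∈ S.subIter n S₀ := hS₀eq ▸ ht'T'
    rw [subIter_eq_biUnion] at ht'mem
    simp only [Set.mem_iUnion, exists_prop] at ht'mem
    obtain ⟨s, hsS₀, ht's⟩ := ht'mem
    obtain ⟨p, hp, y, rfl⟩ := mem_Omega_protoT S hS₀Ω hsS₀
    obtain ⟨q', hq', ht'e⟩ := hps
    have hpT : p ∈ translateSet S₀ (-y) := by
      refine mem_translateSet.mpr ⟨p.translate y, hsS₀, ?_⟩
      rw [Tile.translate_translate, add_neg_cancel, Tile.translate_zero]
    refine ⟨p, hp, S.lam ^ n • (-y), ?_, translateSet S₀ (-y), ?_, hpT, ?_⟩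
    · -- membership in Punc n p
      rw [omegan_translate] at ht's
      obtain ⟨u, hu, hue⟩ := mem_translateSet.mp ht's
      refine ⟨u, hu, q', hq', ?_⟩
      have : u = t'.translate (-(S.lam ^ n • y)) := by
        rw [hue, Tile.translate_translate, add_neg_cancel, Tile.translate_zero]
      rw [this, ht'e, Tile.translate_translate, zero_add, smul_neg]
    · exact ⟨Omega_translate S hS₀Ω (-y), p, hpT, p, hp, (Tile.translate_zero p).symm⟩
    · rw [subIter_translate, hS₀eq, translateSet_translateSet, smul_neg, neg_neg,
        neg_add_cancel, translateSet_zero]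
  · -- uniqueness
    rintro p₁ hp₁ x₁ hx₁ T₁ hT₁ p₂ hp₂ x₂ hx₂ T₂ hT₂ hpT₁ heq₁ hpT₂ heq₂
    obtain ⟨hT₁Ω, -⟩ := hT₁
    obtain ⟨hT₂Ω, -⟩ := hT₂
    obtain ⟨t₁, ht₁, r₁, hr₁, hte₁⟩ := hx₁
    obtain ⟨t₂, ht₂, r₂, hr₂, hte₂⟩ := hx₂
    have hr₁T' : r₁ ∈ T' := by
      rw [heq₁]
      refine mem_translateSet.mpr ⟨t₁, omegan_mem_subIter S hpT₁ ht₁, ?_⟩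
      rw [hte₁, Tile.translate_translate, add_neg_cancel, Tile.translate_zero]
    have hr₂T' : r₂ ∈ T' := by
      rw [heq₂]
      refine mem_translateSet.mpr ⟨t₂, omegan_mem_subIter S hpT₂ ht₂, ?_⟩
      rw [hte₂, Tile.translate_translate, add_neg_cancel, Tile.translate_zero]
    have hrr : r₁ = r₂ :=
      puncture_zero_unique S hT'Ω.1.1 hr₁T' hr₂T'
        ⟨r₁, hr₁, (Tile.translate_zero r₁).symm⟩ ⟨r₂, hr₂, (Tile.translate_zero r₂).symm⟩
    set v : Pt d := (S.lam ^ n)⁻¹ • (x₁ - x₂) with hv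
    have hsmul : S.lam ^ n • v = x₁ - x₂ := smul_inv_smul₀ (lam_pow_ne_zero S n) _
    have hTvΩ : translateSet T₂ v ∈ S.Omega := Omega_translate S hT₂Ω v
    have key : S.subIter n T₁ = S.subIter n (translateSet T₂ v) := by
      rw [subIter_translate, hsmul]
      have h1 : translateSet T' x₁ = S.subIter n T₁ := by
        rw [heq₁, translateSet_translateSet, neg_add_cancel, translateSet_zero]
      have h2 : translateSet T' x₁ = translateSet (S.subIter n T₂) (x₁ - x₂) := by
        rw [heq₂, translateSet_translateSet, neg_add_eq_sub]
      rw [← h1, h2]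
    have hT₁eq : T₁ = translateSet T₂ v :=
      (bijOn_subIter S hA3 n).injOn hT₁Ω hTvΩ key
    obtain ⟨s, hsT₂, hse⟩ := mem_translateSet.mp (hT₁eq ▸ hpT₁)
    have homeg : S.omegan n p₁ = translateSet (S.omegan n s) (x₁ - x₂) := by
      rw [hse, omegan_translate, hsmul]
    have ht₁' : t₁ ∈ translateSet (S.omegan n s) (x₁ - x₂) := homeg ▸ ht₁
    obtain ⟨w, hw, hwe⟩ := mem_translateSet.mp ht₁'
    have hwu : w = r₁.translate x₂ := by
      have h3 : w = t₁.translate (-(x₁ - x₂)) := by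
        rw [hwe, Tile.translate_translate, add_neg_cancel, Tile.translate_zero]
      have h4 : x₁ + -(x₁ - x₂) = x₂ := by abel
      rw [h3, hte₁, Tile.translate_translate, h4]
    have hwmem₂ : r₁.translate x₂ ∈ S.omegan n p₂ := by
      rw [hrr, ← hte₂]; exact ht₂
    have hwmem₁ : r₁.translate x₂ ∈ S.omegan n s := hwu ▸ hw
    have hsp₂ : s = p₂ :=
      parent_unique S hT₂Ω.1.1 hsT₂ hpT₂ (mem_Omega_protoT S hT₂Ω hsT₂)
        ⟨p₂, hp₂, 0, (Tile.translate_zero p₂).symm⟩ n hwmem₁ hwmem₂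
    have hpe : p₁ = p₂.translate v := by rw [hse, hsp₂]
    obtain ⟨hpeq, hv0⟩ := S.proto_no_translate p₂ hp₂ p₁ hp₁ v hpe
    have hx : x₁ = x₂ := by
      have : x₁ - x₂ = 0 := by rw [← hsmul, hv0, smul_zero]
      exact sub_eq_zero.mp this
    refine ⟨hpeq.symm, hx, ?_⟩
    rw [hT₁eq, hv0, translateSet_zero]
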